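/- Let H be a Hilbert space, K a compact operator with KK*ψ_j = λ_jψ_j, ψ_j = Kφ_j, K*Kφ_j = λ_jφ_j, λ₁ ≥ λ₂ ≥ ... ≥ 0. Suppose (X_p) is a family of n-dimensional subspaces with orthogonal projections P_p such that ‖(I−P_p)(KK*)^i‖ ≤ λ_{n+1}^i when p = 2i−1 and ‖(I−P_p)(KK*)^iK‖ ≤ λ_{n+1}^{i+1/2} when p = 2i. If λ_l > λ_{n+1} for some l ≤ n, then for each j = 1, ..., l, ‖ψ_j − P_pψ_j‖/‖ψ_j‖ ≤ (λ_{n+1}/λ_j)^{⌈(p+1)/2⌉ − 1/2·(p mod 2 = 1 ? 0 : −1)} and in particular ‖ψ_j − P_pψ_j‖/‖ψ_j‖ → 0 as p → ∞. -/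

import Mathlib

open ContinuousLinearMap

/-- The orthogonal projection onto a submodule, as an operator on the ambient space. -/
noncomputable def proj {H : Type*} [NormedAddCommGroup H] [InnerProductSpace ℝ H]
    (Z : Submodule ℝ H) [Submodule.HasOrthogonalProjection Z] : H →L[ℝ] H :=
  Z.subtypeL.comp (Submodule.orthogonalProjectionOnto Z)


open RealInnerProductSpace

/-- Convergence, as `p → ∞`, of optimal subspaces to eigenfunctions.  `K` is a compact
operator with `K*K (φ j) = lam j • φ j`, `ψ j = K (φ j)`, `KK* (ψ j) = lam j • ψ j`,
`lam` decreasing and nonnegative.  `X p` are `n`-dimensional subspaces whose orthogonal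
projections `P p = proj (X p)` satisfy `‖(I − P (2i−1))(KK*)^i‖ ≤ lam (n+1)^i` and
`‖(I − P (2i))(KK*)^i K‖ ≤ lam (n+1)^{i+1/2}`.  If `lam l > lam (n+1)` for some `l ≤ n`,
then for each `j = 1, …, l` the quantitative bounds
`‖ψ j − P (2i−1) (ψ j)‖ ≤ (lam (n+1)/lam j)^i ‖ψ j‖` and
`‖ψ j − P (2i) (ψ j)‖ ≤ (lam (n+1)/lam j)^{i+1/2} ‖ψ j‖` hold, and in particular
`‖ψ j − P p (ψ j)‖/‖ψ j‖ → 0` as `p → ∞`. -/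
theorem stmt17 {H : Type*} [NormedAddCommGroup H] [InnerProductSpace ℝ H] [CompleteSpace H]
    (K : H →L[ℝ] H) (hK : IsCompactOperator K)
    (lam : ℕ → ℝ) (φ ψ : ℕ → H)
    (hanti : Antitone lam) (hnonneg : ∀ j, 0 ≤ lam j)
    (hON : Orthonormal ℝ (fun j : ℕ => φ (j + 1)))
    (heig : ∀ j, 1 ≤ j → ContinuousLinearMap.adjoint K (K (φ j)) = lam j • φ j)
    (hψ : ∀ j, 1 ≤ j → ψ j = K (φ j))
    (heig' : ∀ j, 1 ≤ j → K (ContinuousLinearMap.adjoint K (ψ j)) = lam j • ψ j)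
    (n l : ℕ) (hl : 1 ≤ l) (hln : l ≤ n)
    (X : ℕ → Submodule ℝ H) [∀ p, Submodule.HasOrthogonalProjection (X p)]
    (hdim : ∀ p, Module.finrank ℝ (X p) = n)
    (hodd : ∀ i : ℕ, 1 ≤ i →
      ‖(1 - proj (X (2 * i - 1))).comp ((K.comp (ContinuousLinearMap.adjoint K)) ^ i)‖ ≤
        lam (n + 1) ^ i)
    (heven : ∀ i : ℕ,
      ‖(1 - proj (X (2 * i))).comp (((K.comp (ContinuousLinearMap.adjoint K)) ^ i).comp K)‖ ≤
        Real.sqrt (lam (n + 1) ^ (2 * i + 1)))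
    (hgap : lam (n + 1) < lam l) :
    ∀ j, 1 ≤ j → j ≤ l →
      (∀ i : ℕ, 1 ≤ i →
        ‖ψ j - proj (X (2 * i - 1)) (ψ j)‖ ≤ (lam (n + 1) / lam j) ^ i * ‖ψ j‖) ∧
      (∀ i : ℕ,
        ‖ψ j - proj (X (2 * i)) (ψ j)‖ ≤
          Real.sqrt ((lam (n + 1) / lam j) ^ (2 * i + 1)) * ‖ψ j‖) ∧
      Filter.Tendsto (fun p : ℕ => ‖ψ j - proj (X p) (ψ j)‖ / ‖ψ j‖)
        Filter.atTop (nhds 0) := by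

  intro j hj1 hjl
  set T := K.comp (ContinuousLinearMap.adjoint K) with hT
  have hφj : ‖φ j‖ = 1 := by
    have h := hON.1 (j - 1)
    simp only at h
    rwa [Nat.sub_add_cancel hj1] at h
  have hlj : 0 < lam j :=
    lt_of_le_of_lt (hnonneg (n + 1)) (lt_of_lt_of_le hgap (hanti hjl))
  have hTψ : ∀ i : ℕ, (T ^ i) (ψ j) = lam j ^ i • ψ j := by
    intro i
    induction i with
    | zero => simp
    | succ i ih =>
      rw [pow_succ, ContinuousLinearMap.mul_apply]
      have hTj : T (ψ j) = lam j • ψ j := heig' j hj1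
      rw [hTj, map_smul, ih, smul_smul, pow_succ, mul_comm]
  have hinner : (inner ℝ (ψ j) (ψ j) : ℝ) = lam j := by
    rw [hψ j hj1, ← ContinuousLinearMap.adjoint_inner_left, heig j hj1,
      real_inner_smul_left, real_inner_self_eq_norm_sq, hφj]
    ring
  have hnψ : ‖ψ j‖ = Real.sqrt (lam j) := by
    rw [← hinner, real_inner_self_eq_norm_sq, Real.sqrt_sq (norm_nonneg _)]
  have hψpos : 0 < ‖ψ j‖ := by
    rw [hnψ]; exact Real.sqrt_pos.2 hlj
  -- the key evaluations
  have hkey : ∀ p i : ℕ, ((1 - _root_.proj (X p)).comp (T ^ i)) (ψ j)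
      = lam j ^ i • (ψ j - _root_.proj (X p) (ψ j)) := by
    intro p i
    simp [ContinuousLinearMap.comp_apply, hTψ i, ContinuousLinearMap.sub_apply,
      smul_sub, map_smul]
  have hodd' : ∀ i : ℕ, 1 ≤ i →
      ‖ψ j - _root_.proj (X (2 * i - 1)) (ψ j)‖ ≤ (lam (n + 1) / lam j) ^ i * ‖ψ j‖ := by
    intro i hi
    have h1 := hkey (2 * i - 1) i
    have h2 : ‖((1 - _root_.proj (X (2 * i - 1))).comp (T ^ i)) (ψ j)‖
        ≤ lam (n + 1) ^ i * ‖ψ j‖ :=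
      le_trans (ContinuousLinearMap.le_opNorm _ _)
        (mul_le_mul_of_nonneg_right (hodd i hi) (norm_nonneg _))
    rw [h1, norm_smul, Real.norm_eq_abs, abs_of_pos (pow_pos hlj i)] at h2
    rw [div_pow, div_mul_eq_mul_div, le_div_iff₀ (pow_pos hlj i)]
    nlinarith [norm_nonneg (ψ j - _root_.proj (X (2 * i - 1)) (ψ j))]
  have heven' : ∀ i : ℕ,
      ‖ψ j - _root_.proj (X (2 * i)) (ψ j)‖ ≤
        Real.sqrt ((lam (n + 1) / lam j) ^ (2 * i + 1)) * ‖ψ j‖ := by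
    intro i
    have h1 : ((1 - _root_.proj (X (2 * i))).comp ((T ^ i).comp K)) (φ j)
        = lam j ^ i • (ψ j - _root_.proj (X (2 * i)) (ψ j)) := by
      have := hkey (2 * i) i
      simpa [ContinuousLinearMap.comp_apply, ← hψ j hj1] using this
    have h2 : ‖((1 - _root_.proj (X (2 * i))).comp ((T ^ i).comp K)) (φ j)‖
        ≤ Real.sqrt (lam (n + 1) ^ (2 * i + 1)) := by
      calc ‖((1 - _root_.proj (X (2 * i))).comp ((T ^ i).comp K)) (φ j)‖
          ≤ ‖(1 - _root_.proj (X (2 * i))).comp ((T ^ i).comp K)‖ * ‖φ j‖ :=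
            ContinuousLinearMap.le_opNorm _ _
        _ ≤ Real.sqrt (lam (n + 1) ^ (2 * i + 1)) := by
            rw [hφj, mul_one]; exact heven i
    rw [h1, norm_smul, Real.norm_eq_abs, abs_of_pos (pow_pos hlj i)] at h2
    have hrhs : Real.sqrt ((lam (n + 1) / lam j) ^ (2 * i + 1)) * ‖ψ j‖
        = Real.sqrt (lam (n + 1) ^ (2 * i + 1)) / lam j ^ i := by
      rw [hnψ, ← Real.sqrt_mul (pow_nonneg (div_nonneg (hnonneg _) hlj.le) _)]
      rw [show Real.sqrt (lam (n + 1) ^ (2 * i + 1)) / lam j ^ i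
          = Real.sqrt (lam (n + 1) ^ (2 * i + 1)) / Real.sqrt ((lam j ^ i) ^ 2) by
        rw [Real.sqrt_sq (pow_nonneg hlj.le i)]]
      rw [← Real.sqrt_div (pow_nonneg (hnonneg _) _)]
      congr 1
      rw [div_pow]
      field_simp
      ring
    rw [hrhs, le_div_iff₀ (pow_pos hlj i)]
    linarith [h2]
  refine ⟨hodd', heven', ?_⟩
  set r := lam (n + 1) / lam j with hr
  have hr0 : 0 ≤ r := div_nonneg (hnonneg _) hlj.le
  have hr1 : r < 1 :=
    (div_lt_one hlj).2 (lt_of_lt_of_le (lt_of_lt_of_le hgap (hanti hjl)) le_rfl)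
  have hbound : ∀ p : ℕ, ‖ψ j - _root_.proj (X p) (ψ j)‖ / ‖ψ j‖ ≤ r ^ (p / 2) := by
    intro p
    rcases Nat.even_or_odd p with ⟨i, hip⟩ | ⟨i, hip⟩
    · -- p = 2i
      have hp2 : p = 2 * i := by omega
      have hdiv : p / 2 = i := by omega
      have := heven' i
      rw [div_le_iff₀ hψpos, hdiv, hp2]
      refine le_trans this (mul_le_mul_of_nonneg_right ?_ (norm_nonneg _))
      have : Real.sqrt (r ^ (2 * i + 1)) ≤ Real.sqrt ((r ^ i) ^ 2) := by
        apply Real.sqrt_le_sqrt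
        calc r ^ (2 * i + 1) = (r ^ i) ^ 2 * r := by ring
          _ ≤ (r ^ i) ^ 2 * 1 := by nlinarith [pow_nonneg hr0 i]
          _ = (r ^ i) ^ 2 := by ring
      rwa [Real.sqrt_sq (pow_nonneg hr0 i)] at this
    · -- p = 2i + 1 = 2(i+1) - 1
      have hp2 : p = 2 * (i + 1) - 1 := by omega
      have hdiv : p / 2 = i := by omega
      have := hodd' (i + 1) (Nat.le_add_left 1 i)
      rw [div_le_iff₀ hψpos, hdiv, hp2]
      refine le_trans this (mul_le_mul_of_nonneg_right ?_ (norm_nonneg _))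
      calc r ^ (i + 1) = r ^ i * r := by ring
        _ ≤ r ^ i * 1 := by nlinarith [pow_nonneg hr0 i]
        _ = r ^ i := by ring
  have htend : Filter.Tendsto (fun p : ℕ => r ^ (p / 2)) Filter.atTop (nhds 0) := by
    have h1 : Filter.Tendsto (fun k : ℕ => r ^ k) Filter.atTop (nhds 0) :=
      tendsto_pow_atTop_nhds_zero_of_lt_one hr0 hr1
    have h2 : Filter.Tendsto (fun p : ℕ => p / 2) Filter.atTop Filter.atTop :=
      Filter.tendsto_atTop_atTop.2 fun b => ⟨2 * b, fun a ha => by omega⟩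
    exact h1.comp h2
  exact squeeze_zero (fun p => div_nonneg (norm_nonneg _) (norm_nonneg _)) hbound htend
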